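/- arXiv:1510.04396 — 2 statements merged into one kernel-verified Lean document; each statement's English description precedes it below -/
import Mathlib

section
/- The converse of the distance-based affinity theorem fails in general: there exist two distinct lines L_1, L_2 in ℝ^3, a nonzero homogeneous polynomial p vanishing on L_1 ∪ L_2, and points x ∈ L_1, x' ∈ L_2 with ∇p(x), ∇p(x') ≠ 0, such that ⟨∇p(x), x'⟩ = 0 and ⟨∇p(x'), x⟩ = 0 (so the affinity equals 1 even though the points lie in different subspaces). -/
open RealInnerProductSpace

private lemma single_ne_zero' (i : Fin 3) :
    EuclideanSpace.single i (1 : ℝ) ≠ 0 := by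
  intro h
  have := congrArg (fun v : EuclideanSpace ℝ (Fin 3) => v i) h
  simp [EuclideanSpace.single_apply] at this

private lemma eval_eq (p : MvPolynomial (Fin 3) ℝ)
    (hp : p = MvPolynomial.X 2 * (MvPolynomial.X 0 + MvPolynomial.X 1)) :
    (fun y : EuclideanSpace ℝ (Fin 3) => MvPolynomial.eval (fun k => y k) p)
      = fun y => y 2 * (y 0 + y 1) := by
  subst hp; funext y; simp

private lemma grad_eq (x : EuclideanSpace ℝ (Fin 3)) (hx2 : x 2 = 0)
    (hx01 : x 0 + x 1 = 1) :
    gradient (fun y : EuclideanSpace ℝ (Fin 3) => y 2 * (y 0 + y 1)) x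
      = EuclideanSpace.single 2 (1 : ℝ) := by
  set L2 : EuclideanSpace ℝ (Fin 3) →L[ℝ] ℝ := EuclideanSpace.proj (2 : Fin 3) with hL2
  set L01 : EuclideanSpace ℝ (Fin 3) →L[ℝ] ℝ :=
    EuclideanSpace.proj (0 : Fin 3) + EuclideanSpace.proj (1 : Fin 3) with hL01
  have hmul := (L2.hasFDerivAt (x := x)).mul (L01.hasFDerivAt (x := x))
  have hL2x : L2 x = 0 := by simpa [hL2] using hx2
  have hL01x : L01 x = 1 := by simpa [hL01] using hx01
  rw [hL2x, hL01x] at hmul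
  simp only [zero_smul, one_smul, zero_add] at hmul
  have hfun : (fun y => L2 y * L01 y) = fun y : EuclideanSpace ℝ (Fin 3) =>
      y 2 * (y 0 + y 1) := by
    funext y; simp [hL2, hL01]
  rw [show (⇑L2 * ⇑L01) = fun y => L2 y * L01 y from rfl, hfun] at hmul
  have hgrad : HasGradientAt (fun y : EuclideanSpace ℝ (Fin 3) => y 2 * (y 0 + y 1))
      (EuclideanSpace.single 2 (1 : ℝ)) x := by
    rw [hasGradientAt_iff_hasFDerivAt]
    refine hmul.congr_fderiv ?_
    ext y
    simp [hL2, InnerProductSpace.toDual_apply_apply, EuclideanSpace.inner_single_left]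
  exact hgrad.gradient

theorem distance_based_affinity_converse_fails :
    ∃ (L₁ L₂ : Submodule ℝ (EuclideanSpace ℝ (Fin 3))),
      Module.finrank ℝ L₁ = 1 ∧ Module.finrank ℝ L₂ = 1 ∧ L₁ ≠ L₂ ∧
      ∃ p : MvPolynomial (Fin 3) ℝ, p ≠ 0 ∧ p.IsHomogeneous 2 ∧
        (∀ x : EuclideanSpace ℝ (Fin 3), (x ∈ L₁ ∨ x ∈ L₂) →
          MvPolynomial.eval (fun k => x k) p = 0) ∧
        ∃ x ∈ L₁, ∃ x' ∈ L₂,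
          gradient (fun y : EuclideanSpace ℝ (Fin 3) =>
            MvPolynomial.eval (fun k => y k) p) x ≠ 0 ∧
          gradient (fun y : EuclideanSpace ℝ (Fin 3) =>
            MvPolynomial.eval (fun k => y k) p) x' ≠ 0 ∧
          ⟪gradient (fun y : EuclideanSpace ℝ (Fin 3) =>
            MvPolynomial.eval (fun k => y k) p) x, x'⟫ = 0 ∧
          ⟪gradient (fun y : EuclideanSpace ℝ (Fin 3) =>
            MvPolynomial.eval (fun k => y k) p) x', x⟫ = 0 := by
  set e₀ : EuclideanSpace ℝ (Fin 3) := EuclideanSpace.single 0 1 with he₀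
  set e₁ : EuclideanSpace ℝ (Fin 3) := EuclideanSpace.single 1 1 with he₁
  refine ⟨Submodule.span ℝ {e₀}, Submodule.span ℝ {e₁}, ?_, ?_, ?_, ?_⟩
  · exact finrank_span_singleton (single_ne_zero' 0)
  · exact finrank_span_singleton (single_ne_zero' 1)
  · intro h
    have : e₀ ∈ Submodule.span ℝ {e₁} := h ▸ Submodule.mem_span_singleton_self e₀
    obtain ⟨c, hc⟩ := Submodule.mem_span_singleton.mp this
    have := congrArg (fun v : EuclideanSpace ℝ (Fin 3) => v 0) hc
    simp [he₀, he₁, EuclideanSpace.single_apply] at this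
  · refine ⟨MvPolynomial.X 2 * (MvPolynomial.X 0 + MvPolynomial.X 1), ?_, ?_, ?_, ?_⟩
    · intro h
      have := congrArg (MvPolynomial.eval (fun _ => (1 : ℝ))) h
      simp at this
    · have h2 : (MvPolynomial.X 2 : MvPolynomial (Fin 3) ℝ).IsHomogeneous 1 :=
        MvPolynomial.isHomogeneous_X ℝ 2
      have h01 : ((MvPolynomial.X 0 + MvPolynomial.X 1) :
          MvPolynomial (Fin 3) ℝ).IsHomogeneous 1 :=
        (MvPolynomial.isHomogeneous_X ℝ 0).add (MvPolynomial.isHomogeneous_X ℝ 1)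
      exact h2.mul h01
    · intro x hx
      have hx2 : x 2 = 0 := by
        rcases hx with hx | hx
        · obtain ⟨c, hc⟩ := Submodule.mem_span_singleton.mp hx
          have := congrArg (fun v : EuclideanSpace ℝ (Fin 3) => v 2) hc
          simpa [he₀, EuclideanSpace.single_apply] using this.symm
        · obtain ⟨c, hc⟩ := Submodule.mem_span_singleton.mp hx
          have := congrArg (fun v : EuclideanSpace ℝ (Fin 3) => v 2) hc
          simpa [he₁, EuclideanSpace.single_apply] using this.symm
      simp [hx2]
    · refine ⟨e₀, Submodule.mem_span_singleton_self e₀, e₁,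
        Submodule.mem_span_singleton_self e₁, ?_⟩
      rw [eval_eq _ rfl]
      have g0 : gradient (fun y : EuclideanSpace ℝ (Fin 3) => y 2 * (y 0 + y 1)) e₀
          = EuclideanSpace.single 2 (1 : ℝ) :=
        grad_eq e₀ (by simp [he₀, EuclideanSpace.single_apply])
          (by simp [he₀, EuclideanSpace.single_apply])
      have g1 : gradient (fun y : EuclideanSpace ℝ (Fin 3) => y 2 * (y 0 + y 1)) e₁
          = EuclideanSpace.single 2 (1 : ℝ) :=
        grad_eq e₁ (by simp [he₁, EuclideanSpace.single_apply])
          (by simp [he₁, EuclideanSpace.single_apply])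
      rw [g0, g1]
      refine ⟨single_ne_zero' 2, single_ne_zero' 2, ?_, ?_⟩
      · simp [EuclideanSpace.inner_single_left, he₁, EuclideanSpace.single_apply]
      · simp [EuclideanSpace.inner_single_left, he₀, EuclideanSpace.single_apply]
end

section
/- Let A = S_1 ∪ ⋯ ∪ S_n be a union of distinct hyperplanes in ℝ^D with unit normals b_1, …, b_n, let p(x) = ∏ ⟨b_i, x⟩, and let x_j, x_{j'} be points each lying on exactly one hyperplane. Then the angle-based affinity C_{jj'} = |⟨∇p(x_j)/‖∇p(x_j)‖, ∇p(x_{j'})/‖∇p(x_{j'})‖⟩| equals 1 if x_j and x_{j'} lie on the same hyperplane, and equals |⟨b_i, b_{i'}⟩| < 1 if they lie on distinct hyperplanes H_i ≠ H_{i'}. -/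
open RealInnerProductSpace

lemma grad_prod_inner (D n : ℕ) (b : Fin n → EuclideanSpace ℝ (Fin D))
    (x : EuclideanSpace ℝ (Fin D)) (i : Fin n) (hx : ⟪b i, x⟫ = 0) :
    HasGradientAt (fun y : EuclideanSpace ℝ (Fin D) => ∏ k, ⟪b k, y⟫)
      ((∏ j ∈ Finset.univ.erase i, ⟪b j, x⟫) • b i) x := by
  rw [hasGradientAt_iff_hasFDerivAt]
  have h := HasFDerivAt.finset_prod (u := Finset.univ) (x := x)
    (g := fun k (y : EuclideanSpace ℝ (Fin D)) => ⟪b k, y⟫)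
    (g' := fun k => innerSL ℝ (b k)) (fun k _ => (innerSL ℝ (b k)).hasFDerivAt)
  refine h.congr_fderiv (Eq.symm ?_)
  ext y
  rw [Finset.sum_eq_single i]
  · simp [real_inner_smul_left, mul_comm]
  · intro k _ hki
    have : (∏ j ∈ Finset.univ.erase k, ⟪b j, x⟫) = 0 :=
      Finset.prod_eq_zero (Finset.mem_erase.mpr ⟨Ne.symm hki, Finset.mem_univ i⟩) hx
    simp only [this, zero_smul, ContinuousLinearMap.zero_apply]
  · simp

theorem angle_based_affinity_for_hyperplanes
    (D n : ℕ) (b : Fin n → EuclideanSpace ℝ (Fin D)) (hb : ∀ i, ‖b i‖ = 1)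
    (hpar : ∀ i k : Fin n, i ≠ k → ∀ c : ℝ, b i ≠ c • b k)
    (xj xj' : EuclideanSpace ℝ (Fin D)) (i i' : Fin n)
    (hxj : ⟪b i, xj⟫ = 0) (hxjo : ∀ k, k ≠ i → ⟪b k, xj⟫ ≠ 0)
    (hxj' : ⟪b i', xj'⟫ = 0) (hxj'o : ∀ k, k ≠ i' → ⟪b k, xj'⟫ ≠ 0)
    (gj gj' : EuclideanSpace ℝ (Fin D))
    (hgj : gj = gradient (fun y : EuclideanSpace ℝ (Fin D) => ∏ k, ⟪b k, y⟫) xj)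
    (hgj' : gj' = gradient (fun y : EuclideanSpace ℝ (Fin D) => ∏ k, ⟪b k, y⟫) xj') :
    (i = i' → |⟪(‖gj‖)⁻¹ • gj, (‖gj'‖)⁻¹ • gj'⟫| = 1) ∧
    (i ≠ i' → |⟪(‖gj‖)⁻¹ • gj, (‖gj'‖)⁻¹ • gj'⟫| = |⟪b i, b i'⟫| ∧
      |⟪b i, b i'⟫| < 1) := by
  set c : ℝ := ∏ j ∈ Finset.univ.erase i, ⟪b j, xj⟫ with hc
  set c' : ℝ := ∏ j ∈ Finset.univ.erase i', ⟪b j, xj'⟫ with hc'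
  have hcne : c ≠ 0 := Finset.prod_ne_zero_iff.mpr fun k hk =>
    hxjo k (Finset.mem_erase.mp hk).1
  have hc'ne : c' ≠ 0 := Finset.prod_ne_zero_iff.mpr fun k hk =>
    hxj'o k (Finset.mem_erase.mp hk).1
  have hgj1 : gj = c • b i := by
    rw [hgj, (grad_prod_inner D n b xj i hxj).gradient]
  have hgj'1 : gj' = c' • b i' := by
    rw [hgj', (grad_prod_inner D n b xj' i' hxj').gradient]
  have hnj : ‖gj‖ = |c| := by rw [hgj1, norm_smul, hb i, Real.norm_eq_abs, mul_one]
  have hnj' : ‖gj'‖ = |c'| := by rw [hgj'1, norm_smul, hb i', Real.norm_eq_abs, mul_one]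
  have key : |⟪(‖gj‖)⁻¹ • gj, (‖gj'‖)⁻¹ • gj'⟫| = |⟪b i, b i'⟫| := by
    rw [hnj, hnj', hgj1, hgj'1, real_inner_smul_left, real_inner_smul_right,
      real_inner_smul_left, real_inner_smul_right]
    rw [abs_mul, abs_mul, abs_mul, abs_mul, abs_inv, abs_inv, abs_abs, abs_abs]
    have h1 : |c| ≠ 0 := abs_ne_zero.mpr hcne
    have h2 : |c'| ≠ 0 := abs_ne_zero.mpr hc'ne
    field_simp
  constructor
  · intro hii'
    subst hii'
    rw [key, real_inner_self_eq_norm_sq, hb i]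
    norm_num
  · intro hii'
    refine ⟨key, ?_⟩
    rcases lt_or_eq_of_le (abs_real_inner_le_norm (b i) (b i')) with h | h
    · rwa [hb i, hb i', mul_one] at h
    · exfalso
      have h1 : |⟪b i, b i'⟫ / (‖b i‖ * ‖b i'‖)| = 1 := by
        rw [hb i, hb i', mul_one, div_one]
        rw [hb i, hb i', mul_one] at h; exact h
      obtain ⟨_, r, hr, hbr⟩ := (abs_real_inner_div_norm_mul_norm_eq_one_iff (b i) (b i')).mp h1
      exact hpar i' i (Ne.symm hii') r hbr
end
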